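/- arXiv:1002.2105 — 2 statements merged into one kernel-verified Lean document; each statement's English description precedes it below -/
import Mathlib

section
/- Let n ≥ 1, d > 0, and let U be a finite nonempty set of controls with parameters α_u ∈ ℝ and β_u ∈ [0,1] for u ∈ U. Define μ = min_{u∈U} (α_u + β_u/d) and x ∈ ℝ^n by x_i = (i-1)/d. Then for every i ∈ {1,...,n}, μ + x_i = min_{u∈U} { (1-β_u) x_i + β_u x_{i+1} + α_u } for i < n, and μ + x_n = min_{u∈U} { (1-β_u) x_n + β_u x_1 + α_u + n β_u / d }. (That is, (μ, x) solves the dynamic programming eigenvalue equation of the stochastic optimal control traffic model.) -/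
open Finset

theorem stmt_0 {n : ℕ} (hn : 1 ≤ n) (d : ℝ) (hd : 0 < d)
    {U : Type} [Fintype U] [Nonempty U]
    (α β : U → ℝ) (hβ : ∀ u, β u ∈ Set.Icc (0:ℝ) 1)
    (μ : ℝ) (hμ : μ = univ.inf' univ_nonempty (fun u => α u + β u / d))
    (x : Fin n → ℝ) (hx : ∀ i, x i = (i : ℕ) / d) :
    (∀ i : Fin n, ∀ h : (i : ℕ) + 1 < n,
      μ + x i = univ.inf' univ_nonempty
        (fun u => (1 - β u) * x i + β u * x ⟨(i : ℕ) + 1, h⟩ + α u)) ∧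
    μ + x ⟨n - 1, by omega⟩ = univ.inf' univ_nonempty
      (fun u => (1 - β u) * x ⟨n - 1, by omega⟩ + β u * x ⟨0, by omega⟩
        + α u + n * β u / d) := by
  have key : ∀ (c : ℝ) (f : U → ℝ),
      (univ : Finset U).inf' univ_nonempty (fun u => c + f u)
        = c + univ.inf' univ_nonempty f := by
    intro c f
    exact (apply_inf'_eq_inf'_comp univ_nonempty (fun t => c + t)
      (fun a b => (min_add_add_left c a b).symm)).symm
  constructor
  · intro i h
    have : (fun u => (1 - β u) * x i + β u * x ⟨(i : ℕ) + 1, h⟩ + α u)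
        = fun u => x i + (α u + β u / d) := by
      funext u
      rw [hx, hx]
      push_cast
      field_simp
      ring
    rw [this, key, hμ, add_comm]
  · have : (fun u => (1 - β u) * x ⟨n - 1, by omega⟩ + β u * x ⟨0, by omega⟩
        + α u + n * β u / d) = fun u => x ⟨n - 1, by omega⟩ + (α u + β u / d) := by
      funext u
      rw [hx, hx]
      simp only
      have h1 : ((n - 1 : ℕ) : ℝ) = (n : ℝ) - 1 := by
        have : (1:ℕ) ≤ n := hn
        push_cast [this]; ring
      rw [h1]
      push_cast
      field_simp
      ring
    rw [this, key, hμ, add_comm]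
end

section
/- Let U be finite nonempty, α_u ∈ ℝ, β_u ∈ [0,1], and suppose some point (d₀, f(d₀)) of the diagram f(d) = min_u (α_u d + β_u) satisfies f(d₀) > 1 − d₀ with d₀ ∈ [0,1]. Then for every d' ∈ [d₀, 1], f(d') > 1 − d'. In particular f(1) > 0, so the jam point (1,0) is never reached. -/
open Finset

theorem stmt_7 {U : Type} [Fintype U] [Nonempty U]
    (α β : U → ℝ) (hβ : ∀ u, β u ∈ Set.Icc (0:ℝ) 1)
    (f : ℝ → ℝ) (hf : ∀ d, f d = univ.inf' univ_nonempty (fun u => α u * d + β u))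
    (d₀ : ℝ) (hd₀ : d₀ ∈ Set.Icc (0:ℝ) 1) (habove : f d₀ > 1 - d₀) :
    (∀ d' ∈ Set.Icc d₀ 1, f d' > 1 - d') ∧ f 1 > 0 := by
  have hline : ∀ u : U, α u * d₀ + β u > 1 - d₀ := by
    intro u
    have := Finset.inf'_le (fun u => α u * d₀ + β u) (mem_univ u)
    rw [← hf d₀] at this
    linarith
  have hd0pos : 0 < d₀ := by
    rcases lt_or_eq_of_le hd₀.1 with h | h
    · exact h
    · exfalso
      obtain ⟨u⟩ := (inferInstance : Nonempty U)
      have h1 := hline u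
      have h2 := (hβ u).2
      rw [← h] at h1
      nlinarith
  have hslope : ∀ u : U, α u > -1 := by
    intro u
    have h1 := hline u
    have h2 := (hβ u).2
    nlinarith
  have key : ∀ d' ∈ Set.Icc d₀ 1, f d' > 1 - d' := by
    intro d' hd'
    rw [hf d', gt_iff_lt, Finset.lt_inf'_iff]
    intro u _
    have h1 := hline u
    have h2 := hslope u
    nlinarith [hd'.1]
  refine ⟨key, ?_⟩
  have := key 1 ⟨hd₀.2, le_refl 1⟩
  linarith
end
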